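/- If (𝔭_t)_{t∈ℕ₀} is an anytime-valid p-value for Q (so that inf_{t} 𝔭_t stochastically dominates a uniform [0,1] random variable under Q), then for any nonincreasing calibration function f : [0,1] → [0,∞) with ∫₀¹ f(u) du = 1, the process (f(𝔭_t)) is an anytime-valid e-value for Q: E_Q[f(𝔭_τ)] ≤ 1 for all stopping times τ. In particular, (1/(2√(𝔭_t))) is an anytime-valid e-value. -/

import Mathlib

open MeasureTheory Filter
open scoped ENNReal

/-- Value of the p-value process `p` at a possibly infinite stopping time `τ`, where
`𝔭_∞ := liminf_{t→∞} 𝔭_t`. -/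
noncomputable def pStopVal {Ω : Type*} (p : ℕ → Ω → ℝ) (τ : Ω → ℕ∞) (ω : Ω) : ℝ :=
  if h : τ ω = ⊤ then Filter.liminf (fun t => p t ω) Filter.atTop
  else p ((τ ω).untop h) ω

lemma untop_eq_untop' {x : ℕ∞} (h : x ≠ ⊤) : x.untop h = x.untopD 0 := by
  cases x with
  | top => exact absurd rfl h
  | coe n => rfl

lemma pStopVal_mem {Ω : Type*} (p : ℕ → Ω → ℝ) (τ : Ω → ℕ∞)
    (hp01 : ∀ t ω, p t ω ∈ Set.Icc (0:ℝ) 1) (ω : Ω) :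
    pStopVal p τ ω ∈ Set.Icc (0:ℝ) 1 := by
  unfold pStopVal
  split_ifs with h
  · have hb : IsBoundedUnder (· ≤ ·) atTop (fun t => p t ω) :=
      isBoundedUnder_of ⟨1, fun t => (hp01 t ω).2⟩
    have hb' : IsBoundedUnder (· ≥ ·) atTop (fun t => p t ω) :=
      isBoundedUnder_of ⟨0, fun t => (hp01 t ω).1⟩
    constructor
    · exact le_liminf_of_le hb.isCoboundedUnder_ge
        (Filter.Eventually.of_forall fun t => (hp01 t ω).1)
    · refine liminf_le_of_le hb' fun b hb => ?_
      obtain ⟨n, hn⟩ := hb.exists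
      exact le_trans hn (hp01 n ω).2
  · exact hp01 _ ω

lemma pStopVal_measurable {Ω : Type*} {m0 : MeasurableSpace Ω} (ℱ : Filtration ℕ m0)
    (p : ℕ → Ω → ℝ) (hadp : Adapted ℱ p) (τ : Ω → ℕ∞)
    (hτ : ∀ t : ℕ, MeasurableSet[ℱ t] {ω | τ ω ≤ (t : ℕ∞)}) :
    Measurable (pStopVal p τ) := by
  have hpm : ∀ t, Measurable (p t) := fun t => (hadp t).mono (ℱ.le t) le_rfl
  have hle : ∀ t : ℕ, MeasurableSet {ω | τ ω ≤ (t : ℕ∞)} := fun t => ℱ.le t _ (hτ t)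
  have htop : MeasurableSet {ω | τ ω = ⊤} := by
    have : {ω | τ ω = ⊤} = (⋃ t : ℕ, {ω | τ ω ≤ (t : ℕ∞)})ᶜ := by
      ext ω
      simp only [Set.mem_compl_iff, Set.mem_iUnion, Set.mem_setOf_eq, not_exists]
      constructor
      · rintro h t ht; exact absurd (le_antisymm le_top (h ▸ ht : ⊤ ≤ (t:ℕ∞))) (by simp)
      · intro h
        by_contra hne
        lift τ ω to ℕ using hne with n hn
        exact h n le_rfl
    rw [this]
    exact (MeasurableSet.iUnion hle).compl
  have hL : Measurable fun ω => Filter.liminf (fun t => p t ω) Filter.atTop :=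
    Measurable.liminf hpm
  have hNm : Measurable fun ω => (τ ω).untopD 0 := by
    apply measurable_to_countable'
    intro n
    rcases n with _ | n
    · have : (fun ω => (τ ω).untopD 0) ⁻¹' {0} = {ω | τ ω ≤ (0:ℕ∞)} ∪ {ω | τ ω = ⊤} := by
        ext ω
        simp only [Set.mem_preimage, Set.mem_singleton_iff, Set.mem_union, Set.mem_setOf_eq]
        rcases eq_or_ne (τ ω) ⊤ with h | h
        · simp [h]; rfl
        · lift τ ω to ℕ using h with m hm
          constructor
          · intro hm0
            left
            change m = 0 at hm0
            exact_mod_cast Nat.le_zero.mpr hm0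
          · rintro (hm0 | hm0)
            · have : m = 0 := by exact_mod_cast le_antisymm (by exact_mod_cast hm0) (Nat.zero_le m)
              simp [this]; rfl
            · exact absurd hm0 (by simp)
      rw [this]; exact (hle 0).union htop
    · have : (fun ω => (τ ω).untopD 0) ⁻¹' {n+1}
          = {ω | τ ω ≤ ((n+1 : ℕ):ℕ∞)} \ {ω | τ ω ≤ ((n:ℕ):ℕ∞)} := by
        ext ω
        simp only [Set.mem_preimage, Set.mem_singleton_iff, Set.mem_diff, Set.mem_setOf_eq]
        rcases eq_or_ne (τ ω) ⊤ with h | h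
        · constructor
          · intro h0
            rw [h] at h0
            have h1 : (0:ℕ) = n + 1 := h0
            omega
          · rintro ⟨h1, -⟩
            exact absurd (top_le_iff.mp (h ▸ h1)) (WithTop.natCast_ne_top (n+1))
        · lift τ ω to ℕ using h with m hm
          have hum : WithTop.untopD 0 (↑m : ℕ∞) = m := rfl
          rw [hum]
          constructor
          · intro h0
            subst h0
            refine ⟨le_refl _, fun hc => ?_⟩
            have : n + 1 ≤ n := by exact_mod_cast hc
            omega
          · rintro ⟨h1, h2⟩
            have h1' : m ≤ n + 1 := by exact_mod_cast h1
            have h2' : ¬ m ≤ n := fun hc => h2 (by exact_mod_cast hc)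
            omega
      rw [this]; exact (hle (n+1)).diff (hle n)
  have hW : Measurable fun ω => p ((τ ω).untopD 0) ω := by
    have h1 : Measurable fun q : Ω × ℕ => p q.2 q.1 :=
      measurable_from_prod_countable_left fun n => hpm n
    exact h1.comp (measurable_id.prodMk hNm)
  have heq : pStopVal p τ = Set.piecewise {ω | τ ω = ⊤}
      (fun ω => Filter.liminf (fun t => p t ω) Filter.atTop)
      (fun ω => p ((τ ω).untopD 0) ω) := by
    funext ω
    unfold pStopVal
    by_cases h : τ ω = ⊤
    · simp [Set.piecewise, h]
    · simp only [Set.piecewise, Set.mem_setOf_eq, h, dif_neg, if_neg, not_false_iff]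
      rw [untop_eq_untop' h]
  rw [heq]
  exact Measurable.piecewise htop hL hW

/-- Core calibration bound: if `V ∈ [0,1]` stochastically dominates the uniform law and
`g` is nonnegative, nonincreasing on `(0,1]` with `∫⁻_{[0,1]} g ≤ 1`, then `E[g(V)] ≤ 1`. -/
lemma calib_core {Ω : Type*} {m0 : MeasurableSpace Ω} (μ : Measure Ω)
    [IsProbabilityMeasure μ] (V : Ω → ℝ) (hVm : Measurable V)
    (hV : ∀ ω, V ω ∈ Set.Icc (0:ℝ) 1)
    (hdom : ∀ α ∈ Set.Icc (0:ℝ) 1, μ {ω | V ω ≤ α} ≤ ENNReal.ofReal α)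
    (g : ℝ → ℝ) (hgm : Measurable g) (hganti : AntitoneOn g (Set.Ioc 0 1))
    (hgnn : ∀ u, 0 ≤ g u)
    (hint : ∫⁻ u in Set.Icc (0:ℝ) 1, ENNReal.ofReal (g u) ≤ 1) :
    ∫⁻ ω, ENNReal.ofReal (g (V ω)) ∂μ ≤ 1 := by
  have key : ∀ t ∈ Set.Ioi (0:ℝ),
      μ {ω | t < g (V ω)} ≤ (volume.restrict (Set.Icc (0:ℝ) 1)) {u | t < g u} := by
    intro t ht
    rw [Measure.restrict_apply' measurableSet_Icc]
    set S : Set ℝ := {u | t < g u} ∩ Set.Ioc 0 1 with hS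
    by_cases hne : S.Nonempty
    · have hbdd : BddAbove S := ⟨1, fun s hs => hs.2.2⟩
      set a := sSup S with ha
      have ha1 : a ≤ 1 := csSup_le hne fun s hs => hs.2.2
      have ha0 : 0 ≤ a := by
        obtain ⟨s, hs⟩ := hne
        exact le_trans hs.2.1.le (le_csSup hbdd hs)
      have hsub : {ω | t < g (V ω)} ⊆ {ω | V ω ≤ a} := by
        intro ω hω
        by_cases h0 : 0 < V ω
        · exact le_csSup hbdd ⟨hω, h0, (hV ω).2⟩
        · exact le_trans (not_lt.mp h0) ha0
      have h1 : μ {ω | t < g (V ω)} ≤ ENNReal.ofReal a :=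
        le_trans (measure_mono hsub) (hdom a ⟨ha0, ha1⟩)
      have h2 : Set.Ioo 0 a ⊆ {u | t < g u} ∩ Set.Icc 0 1 := by
        intro u hu
        obtain ⟨s, hsS, hus⟩ := exists_lt_of_lt_csSup hne hu.2
        have huIoc : u ∈ Set.Ioc (0:ℝ) 1 := ⟨hu.1, le_trans hus.le hsS.2.2⟩
        exact ⟨lt_of_lt_of_le hsS.1 (hganti huIoc hsS.2 hus.le),
          huIoc.1.le, huIoc.2⟩
      calc μ {ω | t < g (V ω)} ≤ ENNReal.ofReal a := h1
        _ = volume (Set.Ioo (0:ℝ) a) := by simp [Real.volume_Ioo]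
        _ ≤ volume ({u | t < g u} ∩ Set.Icc 0 1) := measure_mono h2
    · have hsub : {ω | t < g (V ω)} ⊆ {ω | V ω ≤ 0} := by
        intro ω hω
        by_contra h
        exact hne ⟨V ω, hω, not_le.mp h, (hV ω).2⟩
      have : μ {ω | t < g (V ω)} ≤ 0 := by
        simpa using le_trans (measure_mono hsub) (hdom 0 ⟨le_refl _, zero_le_one⟩)
      simpa using le_trans this zero_le
  rw [lintegral_eq_lintegral_meas_lt μ (Filter.Eventually.of_forall fun ω => hgnn _)
    (hgm.comp hVm).aemeasurable]
  have hIcc : ∫⁻ u in Set.Icc (0:ℝ) 1, ENNReal.ofReal (g u)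
      = ∫⁻ t in Set.Ioi (0:ℝ), (volume.restrict (Set.Icc (0:ℝ) 1)) {u | t < g u} :=
    lintegral_eq_lintegral_meas_lt _ (Filter.Eventually.of_forall fun u => hgnn u)
      hgm.aemeasurable
  calc ∫⁻ t in Set.Ioi (0:ℝ), μ {ω | t < g (V ω)}
      ≤ ∫⁻ t in Set.Ioi (0:ℝ), (volume.restrict (Set.Icc (0:ℝ) 1)) {u | t < g u} :=
        setLIntegral_mono' measurableSet_Ioi key
    _ ≤ 1 := hIcc ▸ hint

lemma sqrt_calib_int :
    ∫⁻ u in Set.Icc (0:ℝ) 1, ENNReal.ofReal (1 / (2 * Real.sqrt u)) ≤ 1 := by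
  have heq : ∀ u ∈ Set.Icc (0:ℝ) 1, 1 / (2 * Real.sqrt u) = u ^ (-(1/2):ℝ) / 2 := by
    intro u hu
    rcases eq_or_lt_of_le hu.1 with h | h
    · rw [← h]
      simp [Real.zero_rpow (by norm_num : (-(1/2):ℝ) ≠ 0), Real.sqrt_zero]
    · have hs : Real.sqrt u ≠ 0 := ne_of_gt (Real.sqrt_pos.mpr h)
      rw [Real.rpow_neg h.le, ← Real.sqrt_eq_rpow]
      field_simp
  have hInt : MeasureTheory.IntegrableOn (fun u : ℝ => u ^ (-(1/2):ℝ) / 2)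
      (Set.Icc (0:ℝ) 1) volume := by
    rw [integrableOn_Icc_iff_integrableOn_Ioc,
      ← intervalIntegrable_iff_integrableOn_Ioc_of_le zero_le_one]
    exact (intervalIntegral.intervalIntegrable_rpow' (by norm_num)).div_const 2
  have hval : ∫ u in Set.Icc (0:ℝ) 1, u ^ (-(1/2):ℝ) / 2 = 1 := by
    rw [MeasureTheory.integral_Icc_eq_integral_Ioc,
      ← intervalIntegral.integral_of_le zero_le_one, intervalIntegral.integral_div,
      integral_rpow (Or.inl (by norm_num))]
    rw [Real.one_rpow, Real.zero_rpow (by norm_num)]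
    norm_num
  rw [setLIntegral_congr_fun measurableSet_Icc
    (fun u hu => by rw [heq u hu])]
  rw [← MeasureTheory.ofReal_integral_eq_lintegral_ofReal hInt
    ((ae_restrict_iff' measurableSet_Icc).2 (Filter.Eventually.of_forall fun u hu =>
      div_nonneg (Real.rpow_nonneg hu.1 _) two_pos.le))]
  rw [hval]
  simp

/-- Calibration of anytime-valid p-values into anytime-valid e-values: if
`Q(𝔭_τ ≤ α) ≤ α` for all stopping times `τ` and `α ∈ [0,1]`, and `f : [0,1] → [0,∞)` is
nonincreasing with `∫₀¹ f(u) du = 1`, then `E_Q[f(𝔭_τ)] ≤ 1` for all stopping times `τ`.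
In particular `1/(2√𝔭_τ)` has expectation at most one at every stopping time. -/
theorem p_value_calibration_to_e_value {Ω : Type*} {m0 : MeasurableSpace Ω}
    (μ : Measure Ω) [IsProbabilityMeasure μ] (ℱ : Filtration ℕ m0)
    (p : ℕ → Ω → ℝ) (hadp : Adapted ℱ p) (hp01 : ∀ t ω, p t ω ∈ Set.Icc (0:ℝ) 1)
    (hvalid : ∀ τ : Ω → ℕ∞, (∀ t : ℕ, MeasurableSet[ℱ t] {ω | τ ω ≤ (t : ℕ∞)}) →
      ∀ α ∈ Set.Icc (0:ℝ) 1, μ {ω | pStopVal p τ ω ≤ α} ≤ ENNReal.ofReal α) :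
    (∀ f : ℝ → ℝ, AntitoneOn f (Set.Icc (0:ℝ) 1) → (∀ u ∈ Set.Icc (0:ℝ) 1, 0 ≤ f u) →
      (∫ u in Set.Icc (0:ℝ) 1, f u) = 1 →
      ∀ τ : Ω → ℕ∞, (∀ t : ℕ, MeasurableSet[ℱ t] {ω | τ ω ≤ (t : ℕ∞)}) →
        ∫⁻ ω, ENNReal.ofReal (f (pStopVal p τ ω)) ∂μ ≤ 1) ∧
    (∀ τ : Ω → ℕ∞, (∀ t : ℕ, MeasurableSet[ℱ t] {ω | τ ω ≤ (t : ℕ∞)}) →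
      ∫⁻ ω, ENNReal.ofReal (1 / (2 * Real.sqrt (pStopVal p τ ω))) ∂μ ≤ 1) := by
  constructor
  · intro f hanti hnn hfint τ hτ
    have hVm := pStopVal_measurable ℱ p hadp τ hτ
    have hV := pStopVal_mem p τ hp01
    have hdom := hvalid τ hτ
    set clamp : ℝ → ℝ := fun x => max 0 (min x 1) with hclamp
    have hclamp_mem : ∀ x, clamp x ∈ Set.Icc (0:ℝ) 1 := fun x =>
      ⟨le_max_left _ _, max_le zero_le_one (min_le_right x 1)⟩
    have hclamp_mono : Monotone clamp := fun x y h =>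
      max_le_max le_rfl (min_le_min h le_rfl)
    have hclamp_id : ∀ u ∈ Set.Icc (0:ℝ) 1, clamp u = u := by
      intro u hu
      simp only [hclamp]
      rw [min_eq_left hu.2, max_eq_right hu.1]
    set g : ℝ → ℝ := fun x => f (clamp x) with hg
    have hganti : Antitone g := fun x y h =>
      hanti (hclamp_mem x) (hclamp_mem y) (hclamp_mono h)
    have hgm : Measurable g := hganti.measurable
    have hg_eq : ∀ u ∈ Set.Icc (0:ℝ) 1, g u = f u := by
      intro u hu
      simp only [hg]
      rw [hclamp_id u hu]
    have hgnn : ∀ u, 0 ≤ g u := fun u => hnn _ (hclamp_mem u)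
    have hfi : MeasureTheory.IntegrableOn f (Set.Icc (0:ℝ) 1) volume := by
      by_contra h
      rw [MeasureTheory.integral_undef h] at hfint
      norm_num at hfint
    have hint : ∫⁻ u in Set.Icc (0:ℝ) 1, ENNReal.ofReal (g u) ≤ 1 := by
      rw [setLIntegral_congr_fun measurableSet_Icc
        (fun u hu => by rw [hg_eq u hu])]
      rw [← MeasureTheory.ofReal_integral_eq_lintegral_ofReal hfi
        ((ae_restrict_iff' measurableSet_Icc).2
          (Filter.Eventually.of_forall fun u hu => hnn u hu))]
      rw [hfint]
      simp
    have hcore := calib_core μ (pStopVal p τ) hVm hV hdom g hgm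
      (hganti.antitoneOn _) hgnn hint
    calc ∫⁻ ω, ENNReal.ofReal (f (pStopVal p τ ω)) ∂μ
        = ∫⁻ ω, ENNReal.ofReal (g (pStopVal p τ ω)) ∂μ :=
          lintegral_congr fun ω => by rw [hg_eq _ (hV ω)]
      _ ≤ 1 := hcore
  · intro τ hτ
    have hVm := pStopVal_measurable ℱ p hadp τ hτ
    have hV := pStopVal_mem p τ hp01
    have hdom := hvalid τ hτ
    refine calib_core μ (pStopVal p τ) hVm hV hdom
      (fun u => 1 / (2 * Real.sqrt u)) ?_ ?_ (fun u => by positivity) sqrt_calib_int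
    · exact measurable_const.div (measurable_const.mul Real.continuous_sqrt.measurable)
    · intro u hu v hv huv
      exact one_div_le_one_div_of_le (mul_pos two_pos (Real.sqrt_pos.mpr hu.1))
        (mul_le_mul_of_nonneg_left (Real.sqrt_le_sqrt huv) two_pos.le)
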